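/- With Q defined on π(A₀)Ω by Q π(A)Ω = π(δ(A))Ω for a supersymmetric state φ, the operator equalities π(δ(A)) = Q π(A) - π(γ(A)) Q and π(δ*(A)) = Q* π(A) - π(γ(A)) Q* hold on π(A₀)Ω for all A ∈ A₀. -/

import Mathlib

open scoped ComplexOrder

/-- The linear map `a ↦ π a Ω` from the algebra into the Hilbert space. -/
noncomputable def gnsVec {F H : Type*} [NormedRing F] [StarRing F] [NormedAlgebra ℂ F]
    [NormedAddCommGroup H] [InnerProductSpace ℂ H] [CompleteSpace H]
    (π : F →⋆ₐ[ℂ] (H →L[ℂ] H)) (Ω : H) : F →ₗ[ℂ] H where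
  toFun a := π a Ω
  map_add' a b := by simp
  map_smul' c a := by simp

/-- The formal adjoint superderivation `δ* (c) = - (δ (γ (c*)))*`. -/
noncomputable def dstar {F : Type*} [NormedRing F] [StarRing F] [NormedAlgebra ℂ F]
    (γ : F ≃⋆ₐ[ℂ] F) (δ : F →ₗ[ℂ] F) (c : F) : F :=
  -star (δ (γ (star c)))

/-- With `Q` defined on `π(A₀)Ω` by `Q (π A Ω) = π (δ A) Ω` for a
supersymmetric state `φ`, the operator equalities
`π (δ A) = Q π(A) - π (γ A) Q` and `π (δ* A) = Q* π(A) - π (γ A) Q*` hold on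
`π(A₀)Ω`, for all `A ∈ A₀`. -/
theorem supercharge_implements_superderivation
    {F : Type*} [NormedRing F] [StarRing F] [CStarRing F] [NormedAlgebra ℂ F]
    [StarModule ℂ F] [CompleteSpace F]
    {H : Type*} [NormedAddCommGroup H] [InnerProductSpace ℂ H] [CompleteSpace H]
    (γ : F ≃⋆ₐ[ℂ] F) (hγ : ∀ x, γ (γ x) = x)
    (A₀ : StarSubalgebra ℂ F) (hA₀ : ∀ a ∈ A₀, γ a ∈ A₀)
    (δ : F →ₗ[ℂ] F)
    (hodd : ∀ a ∈ A₀, δ (γ a) = - γ (δ a))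
    (hleib : ∀ a ∈ A₀, ∀ b ∈ A₀, δ (a * b) = δ a * b + γ a * δ b)
    (φ : F →ₗ[ℂ] ℂ) (hφpos : ∀ x : F, 0 ≤ φ (star x * x)) (hφ1 : φ 1 = 1)
    (hsusy : ∀ a ∈ A₀, φ (δ a) = 0)
    (π : F →⋆ₐ[ℂ] (H →L[ℂ] H)) (Ω : H)
    (hGNS : ∀ x : F, φ x = inner ℂ Ω (π x Ω))
    (hdense :
      Dense (((Subalgebra.toSubmodule A₀.toSubalgebra).map (gnsVec π Ω) : Submodule ℂ H)
        : Set H))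
    (Q : H →ₗ.[ℂ] H)
    (hQdom : Q.domain = (Subalgebra.toSubmodule A₀.toSubalgebra).map (gnsVec π Ω))
    (hQ : ∀ a ∈ A₀, ∀ h : π a Ω ∈ Q.domain, Q ⟨π a Ω, h⟩ = π (δ a) Ω) :
    ∀ a ∈ A₀, ∀ b ∈ A₀,
      -- the vectors of π(A₀)Ω lie in the domains of Q and Q*
      (π a (π b Ω) ∈ Q.domain) ∧ (π b Ω ∈ Q.domain) ∧
      (π a (π b Ω) ∈ Q.adjoint.domain) ∧ (π b Ω ∈ Q.adjoint.domain) ∧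
      -- π(δ(A)) = Q π(A) - π(γ(A)) Q on π(A₀)Ω
      (∀ (h1 : π a (π b Ω) ∈ Q.domain) (h2 : π b Ω ∈ Q.domain),
        π (δ a) (π b Ω) = Q ⟨π a (π b Ω), h1⟩ - π (γ a) (Q ⟨π b Ω, h2⟩)) ∧
      -- π(δ*(A)) = Q* π(A) - π(γ(A)) Q* on π(A₀)Ω
      (∀ (h1 : π a (π b Ω) ∈ Q.adjoint.domain) (h2 : π b Ω ∈ Q.adjoint.domain),
        π (- star (δ (γ (star a)))) (π b Ω)
          = Q.adjoint ⟨π a (π b Ω), h1⟩ - π (γ a) (Q.adjoint ⟨π b Ω, h2⟩)) := by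
  have hQdense : Dense (Q.domain : Set H) := by rw [hQdom]; exact hdense
  -- inner products of GNS vectors
  have ip : ∀ x y : F, (inner ℂ (π x Ω) (π y Ω) : ℂ) = φ (star x * y) := by
    intro x y
    rw [hGNS, map_mul, ContinuousLinearMap.mul_apply, map_star,
      ContinuousLinearMap.star_eq_adjoint, ContinuousLinearMap.adjoint_inner_right]
  -- φ is star-linear
  have φstar : ∀ w : F, φ (star w) = starRingEnd ℂ (φ w) := by
    intro w
    rw [hGNS, hGNS, map_star, ContinuousLinearMap.star_eq_adjoint,
      ContinuousLinearMap.adjoint_inner_right, ← inner_conj_symm]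
  -- the key formal-adjoint identity
  have keyI : ∀ A ∈ A₀, ∀ C ∈ A₀,
      (inner ℂ (π (δ A) Ω) (π C Ω) : ℂ) = inner ℂ (π A Ω) (π (dstar γ δ C) Ω) := by
    intro A hA C hC
    have hCs : star C ∈ A₀ := star_mem hC
    have hγCs : γ (star C) ∈ A₀ := hA₀ _ hCs
    have hsus : φ (δ (γ (star C) * A)) = 0 := hsusy _ (mul_mem hγCs hA)
    have hδexp : δ (γ (star C) * A) = -(γ (δ (star C)) * A) + star C * δ A := by
      rw [hleib _ hγCs _ hA, hodd _ hCs, hγ, neg_mul]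
    have h1 : φ (star C * δ A) = φ (γ (δ (star C)) * A) := by
      have h := hsus
      rw [hδexp, map_add, map_neg] at h
      linear_combination h
    -- LHS
    have hL : (inner ℂ (π (δ A) Ω) (π C Ω) : ℂ)
        = starRingEnd ℂ (φ (γ (δ (star C)) * A)) := by
      rw [ip, ← h1, ← φstar]
      congr 1
      simp [star_mul]
    -- RHS
    have hR : (inner ℂ (π A Ω) (π (dstar γ δ C) Ω) : ℂ)
        = starRingEnd ℂ (φ (γ (δ (star C)) * A)) := by
      rw [ip, dstar]
      have : star A * -star (δ (γ (star C))) = -star (δ (γ (star C)) * A) := by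
        simp [star_mul]
      rw [this, map_neg, φstar, hodd _ hCs]
      simp
    rw [hL, hR]
  -- membership in Q.domain
  have memQ : ∀ c ∈ A₀, π c Ω ∈ Q.domain := by
    intro c hc
    rw [hQdom]
    exact ⟨c, hc, rfl⟩
  -- membership and value of the adjoint on GNS vectors
  have adjval : ∀ c ∈ A₀, ∃ hm : π c Ω ∈ Q.adjoint.domain,
      Q.adjoint ⟨π c Ω, hm⟩ = π (dstar γ δ c) Ω := by
    intro c hc
    have hx₀ : ∀ x : Q.domain, (inner ℂ (π (dstar γ δ c) Ω) (x : H) : ℂ)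
        = inner ℂ (π c Ω) (Q x) := by
      rintro ⟨x, hx⟩
      rw [hQdom] at hx
      obtain ⟨A, hA, rfl⟩ := hx
      have hAm : π A Ω ∈ Q.domain := memQ A hA
      have hQx : Q ⟨π A Ω, hAm⟩ = π (δ A) Ω := hQ A hA hAm
      have hxeq : (⟨gnsVec π Ω A, by rw [hQdom]; exact ⟨A, hA, rfl⟩⟩ : Q.domain)
          = ⟨π A Ω, hAm⟩ := rfl
      show (inner ℂ (π (dstar γ δ c) Ω) (π A Ω) : ℂ)
          = inner ℂ (π c Ω) (Q (⟨gnsVec π Ω A, _⟩ : Q.domain))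
      rw [hxeq, hQx, ← inner_conj_symm ((π (dstar γ δ c)) Ω), ← keyI A hA c hc, inner_conj_symm]
    refine ⟨LinearPMap.mem_adjoint_domain_of_exists _ ⟨π (dstar γ δ c) Ω, hx₀⟩, ?_⟩
    exact LinearPMap.adjoint_apply_eq hQdense _ hx₀
  intro a ha b hb
  have hab : a * b ∈ A₀ := mul_mem ha hb
  have habv : π a (π b Ω) = π (a * b) Ω := by rw [map_mul]; rfl
  have mem1 : π a (π b Ω) ∈ Q.domain := by rw [habv]; exact memQ _ hab
  have mem2 : π b Ω ∈ Q.domain := memQ b hb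
  obtain ⟨am1, av1⟩ := adjval (a * b) hab
  obtain ⟨am2, av2⟩ := adjval b hb
  have mem3 : π a (π b Ω) ∈ Q.adjoint.domain := by rw [habv]; exact am1
  refine ⟨mem1, mem2, mem3, am2, ?_, ?_⟩
  · intro h1 h2
    have e1 : (⟨π a (π b Ω), h1⟩ : Q.domain) = ⟨π (a * b) Ω, by rw [← habv]; exact h1⟩ :=
      Subtype.ext habv
    rw [e1, hQ _ hab, hQ b hb, hleib a ha b hb]
    simp only [map_add, map_mul, ContinuousLinearMap.add_apply, ContinuousLinearMap.mul_apply]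
    abel
  · intro h1 h2
    have e1 : (⟨π a (π b Ω), h1⟩ : Q.adjoint.domain) = ⟨π (a * b) Ω, am1⟩ :=
      Subtype.ext habv
    have e2 : (⟨π b Ω, h2⟩ : Q.adjoint.domain) = ⟨π b Ω, am2⟩ := rfl
    rw [e1, e2, av1, av2]
    -- superderivation identity for dstar
    have hds : dstar γ δ (a * b) = dstar γ δ a * b + γ a * dstar γ δ b := by
      have h1' : star (γ (star a)) = γ a := by rw [← map_star, star_star]
      have h2' : star (γ (γ (star b))) = b := by rw [hγ, star_star]
      rw [dstar, dstar, dstar, star_mul, map_mul,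
        hleib _ (hA₀ _ (star_mem hb)) _ (hA₀ _ (star_mem ha)),
        star_add, star_mul, star_mul, h1', h2']
      noncomm_ring
    show π (dstar γ δ a) (π b Ω) = π (dstar γ δ (a * b)) Ω - π (γ a) (π (dstar γ δ b) Ω)
    rw [hds]
    simp only [map_add, map_mul, ContinuousLinearMap.add_apply, ContinuousLinearMap.mul_apply]
    abel
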